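/- Let N ≥ 2, V_N the volume of the unit ball in ℝ^N, μ_N(x) = 1/(V_N (1 + |x|^(N/(N-1)))^N), and v_N(x) = ln μ_N(x). Then the N-Laplacian of v_N satisfies Δ_N v_N(x) = -N^N (N/(N-1))^(N-1) V_N μ_N(x) for all x ≠ 0, where Δ_N u = div(|∇u|^(N-2) ∇u). -/

import Mathlib

open MeasureTheory
open scoped RealInnerProductSpace

set_option maxHeartbeats 1000000

/-- For `N ≥ 2`, `μ_N(x) = 1/(V_N (1+|x|^(N/(N-1)))^N)` and `v_N = ln μ_N`, the
`N`-Laplacian (divergence of `|∇v_N|^(N-2) ∇v_N`) satisfies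
`Δ_N v_N(x) = -N^N (N/(N-1))^(N-1) V_N μ_N(x)` for every `x ≠ 0`. -/
theorem stmt10 (N : ℕ) (hN : 2 ≤ N) (V : ℝ)
    (hV : V = (volume (Metric.ball (0 : EuclideanSpace ℝ (Fin N)) 1)).toReal)
    (μ v : EuclideanSpace ℝ (Fin N) → ℝ)
    (hμ : ∀ x, μ x = 1 / (V * (1 + ‖x‖ ^ ((N : ℝ) / ((N : ℝ) - 1))) ^ N))
    (hv : ∀ x, v x = Real.log (μ x))
    (x : EuclideanSpace ℝ (Fin N)) (hx : x ≠ 0) :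
    (∑ i : Fin N,
        ⟪fderiv ℝ (fun y => ‖gradient v y‖ ^ (N - 2) • gradient v y) x
            (EuclideanSpace.single i (1 : ℝ)),
          EuclideanSpace.single i (1 : ℝ)⟫) =
      -((N : ℝ) ^ N * ((N : ℝ) / ((N : ℝ) - 1)) ^ (N - 1) * V * μ x) := by
  have hNR : (2 : ℝ) ≤ (N : ℝ) := by exact_mod_cast hN
  have hd : (0 : ℝ) < (N : ℝ) - 1 := by linarith
  set p : ℝ := (N : ℝ) / ((N : ℝ) - 1) with hp
  have hppos : 0 < p := by positivity
  have hNp : ((N : ℝ) - 1) * p = (N : ℝ) := by rw [hp, mul_comm]; exact div_mul_cancel₀ _ hd.ne'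
  have hp1 : (p - 1) * ((N : ℝ) - 1) = 1 := by nlinarith [hNp]
  clear_value p
  have hV0 : 0 < V := by
    rw [hV]
    have h1 : (0 : ENNReal) < volume (Metric.ball (0 : EuclideanSpace ℝ (Fin N)) 1) :=
      Metric.measure_ball_pos _ _ one_pos
    have h2 : volume (Metric.ball (0 : EuclideanSpace ℝ (Fin N)) 1) < ⊤ := measure_ball_lt_top
    exact ENNReal.toReal_pos h1.ne' h2.ne
  -- rpow helpers
  have hA : ∀ y : EuclideanSpace ℝ (Fin N), ((‖y‖ ^ 2 : ℝ)) ^ (p / 2) = ‖y‖ ^ p := by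
    intro y
    rw [← Real.rpow_natCast ‖y‖ 2, ← Real.rpow_mul (norm_nonneg y)]
    congr 1
    ring
  have hA' : ∀ y : EuclideanSpace ℝ (Fin N), ((‖y‖ ^ 2 : ℝ)) ^ (p / 2 - 1) = ‖y‖ ^ (p - 2) := by
    intro y
    rw [← Real.rpow_natCast ‖y‖ 2, ← Real.rpow_mul (norm_nonneg y)]
    congr 1
    ring
  -- scalar functions
  set G : ℝ → ℝ := fun t => -Real.log V + (-(N : ℝ)) * Real.log (1 + t ^ (p / 2)) with hG
  have hvG : v = fun z => G (‖z‖ ^ 2) := by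
    funext z
    have hs0 : (0 : ℝ) ≤ ‖z‖ ^ p := Real.rpow_nonneg (norm_nonneg z) p
    have hB : (0 : ℝ) < 1 + ‖z‖ ^ p := by linarith
    rw [hv, hμ, hG]
    simp only [hA z]
    rw [one_div, Real.log_inv, Real.log_mul hV0.ne' (pow_ne_zero _ hB.ne'), Real.log_pow]
    push_cast
    ring
  -- gradient of v away from 0
  have hgrad : ∀ y : EuclideanSpace ℝ (Fin N), y ≠ 0 →
      gradient v y = (-((N : ℝ) * p) * ‖y‖ ^ (p - 2) / (1 + ‖y‖ ^ p)) • y := by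
    intro y hy
    have hyn : (0 : ℝ) < ‖y‖ := norm_pos_iff.mpr hy
    have ht : (0 : ℝ) < ‖y‖ ^ 2 := by positivity
    have hs0 : (0 : ℝ) < ‖y‖ ^ p := Real.rpow_pos_of_pos hyn p
    have hB : (0 : ℝ) < 1 + (‖y‖ ^ 2 : ℝ) ^ (p / 2) := by rw [hA y]; linarith
    -- derivative of inner function
    have h1 : HasDerivAt (fun t : ℝ => 1 + t ^ (p / 2))
        ((p / 2) * (‖y‖ ^ 2 : ℝ) ^ (p / 2 - 1)) (‖y‖ ^ 2) := by
      simpa using (Real.hasDerivAt_rpow_const (p := p / 2) (Or.inl ht.ne')).const_add 1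
    have h2 : HasDerivAt G
        ((-(N : ℝ)) * ((p / 2) * (‖y‖ ^ 2 : ℝ) ^ (p / 2 - 1) / (1 + (‖y‖ ^ 2 : ℝ) ^ (p / 2))))
        (‖y‖ ^ 2) := ((h1.log hB.ne').const_mul (-(N : ℝ))).const_add (-Real.log V)
    have h3 : HasFDerivAt (fun z : EuclideanSpace ℝ (Fin N) => ‖z‖ ^ 2) (2 • (innerSL ℝ y)) y :=
      (hasStrictFDerivAt_norm_sq y).hasFDerivAt
    have h4 := h2.comp_hasFDerivAt y h3
    set d : ℝ := (-(N : ℝ)) * ((p / 2) * (‖y‖ ^ 2 : ℝ) ^ (p / 2 - 1) / (1 + (‖y‖ ^ 2 : ℝ) ^ (p / 2))) with hd_def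
    have h5 : (d • (2 • (innerSL ℝ y)) : EuclideanSpace ℝ (Fin N) →L[ℝ] ℝ) = InnerProductSpace.toDual ℝ (EuclideanSpace ℝ (Fin N)) ((2 * d) • y) := by
      ext z
      simp [real_inner_smul_left, two_smul]
      ring
    rw [h5] at h4
    have h6 : HasGradientAt v ((2 * d) • y) y := by
      rw [hvG]; have h7 := h4.hasGradientAt; rw [LinearIsometryEquiv.symm_apply_apply] at h7; exact h7
    rw [h6.gradient]
    congr 1
    rw [hd_def, hA y, hA' y]
    field_simp
  -- the smooth form of the field
  set c : ℝ := -(((N : ℝ) * p) ^ (N - 1)) with hc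
  clear_value c
  set F : EuclideanSpace ℝ (Fin N) → EuclideanSpace ℝ (Fin N) := fun y => (c * (1 + ((‖y‖ ^ 2 : ℝ)) ^ (p / 2)) ^ (-((N : ℝ) - 1))) • y with hF
  have hfield : ∀ y : EuclideanSpace ℝ (Fin N), y ≠ 0 → ‖gradient v y‖ ^ (N - 2) • gradient v y = F y := by
    intro y hy
    have hyn : (0 : ℝ) < ‖y‖ := norm_pos_iff.mpr hy
    have hs0 : (0 : ℝ) < ‖y‖ ^ p := Real.rpow_pos_of_pos hyn p
    have hB : (0 : ℝ) < 1 + ‖y‖ ^ p := by linarith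
    have hNp0 : (0 : ℝ) < (N : ℝ) * p := by positivity
    set a : ℝ := -((N : ℝ) * p) * ‖y‖ ^ (p - 2) / (1 + ‖y‖ ^ p) with ha
    have hX : (0 : ℝ) < ‖y‖ ^ (p - 2) := Real.rpow_pos_of_pos hyn _
    have ha0 : a < 0 := by
      apply div_neg_of_neg_of_pos _ hB
      nlinarith
    rw [hgrad y hy, hF]
    rw [norm_smul, smul_smul]
    congr 1
    rw [Real.norm_eq_abs, abs_of_neg ha0]
    simp only [hA y]
    set K : ℝ := (N : ℝ) * p with hK
    set B : ℝ := 1 + ‖y‖ ^ p with hB_def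
    clear_value K B
    have hmul : ‖y‖ ^ (p - 2) * ‖y‖ = ‖y‖ ^ (p - 1) := by
      nth_rewrite 2 [← Real.rpow_one ‖y‖]
      rw [← Real.rpow_add hyn]
      ring_nf
    have h1 : -a * ‖y‖ = K * ‖y‖ ^ (p - 1) / B := by
      rw [ha, ← hmul]; ring
    rw [h1, div_pow, mul_pow]
    have h3 : (‖y‖ ^ (p - 1)) ^ (N - 2) = ‖y‖ ^ ((p - 1) * ((N : ℝ) - 2)) := by
      rw [← Real.rpow_natCast (‖y‖ ^ (p - 1)) (N - 2), ← Real.rpow_mul (norm_nonneg y)]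
      congr 2
      push_cast [Nat.cast_sub hN]
      ring
    have hexp : (p - 1) * ((N : ℝ) - 2) + (p - 2) = 0 := by linear_combination hp1
    have hyy : ‖y‖ ^ ((p - 1) * ((N : ℝ) - 2)) * ‖y‖ ^ (p - 2) = 1 := by
      rw [← Real.rpow_add hyn, hexp, Real.rpow_zero]
    have hKK : K ^ (N - 2) * K = K ^ (N - 1) := by
      rw [← pow_succ]; congr 1; omega
    have hBB : B ^ (N - 2) * B = B ^ (N - 1) := by
      rw [← pow_succ]; congr 1; omega
    have hBr : B ^ (-((N : ℝ) - 1)) = 1 / B ^ (N - 1) := by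
      rw [show -((N : ℝ) - 1) = -(((N - 1 : ℕ) : ℝ)) by push_cast [Nat.cast_sub (by omega : 1 ≤ N)]; ring,
        Real.rpow_neg hB.le, Real.rpow_natCast, one_div]
    rw [h3, hBr]
    rw [show K ^ (N - 2) * ‖y‖ ^ ((p - 1) * ((N : ℝ) - 2)) / B ^ (N - 2) * (-K * ‖y‖ ^ (p - 2) / B)
        = -((K ^ (N - 2) * K) * (‖y‖ ^ ((p - 1) * ((N : ℝ) - 2)) * ‖y‖ ^ (p - 2))) / (B ^ (N - 2) * B)
        from by ring, hyy, hKK, hBB, hc]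
    ring
  -- derivative of F at x
  have hxn : (0 : ℝ) < ‖x‖ := norm_pos_iff.mpr hx
  have htx : (0 : ℝ) < ‖x‖ ^ 2 := by positivity
  have hsx : (0 : ℝ) < ‖x‖ ^ p := Real.rpow_pos_of_pos hxn p
  have hBx : (0 : ℝ) < 1 + ‖x‖ ^ p := by linarith
  have hBx' : (0 : ℝ) < 1 + ((‖x‖ ^ 2 : ℝ)) ^ (p / 2) := by rw [hA x]; linarith
  set φd : ℝ := c * (-((N : ℝ) - 1) * (1 + ((‖x‖ ^ 2 : ℝ)) ^ (p / 2)) ^ (-((N : ℝ) - 1) - 1)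
      * ((p / 2) * ((‖x‖ ^ 2 : ℝ)) ^ (p / 2 - 1))) with hφd
  have hφ : HasDerivAt (fun t : ℝ => c * (1 + t ^ (p / 2)) ^ (-((N : ℝ) - 1))) φd (‖x‖ ^ 2) := by
    have h1 : HasDerivAt (fun t : ℝ => 1 + t ^ (p / 2))
        ((p / 2) * ((‖x‖ ^ 2 : ℝ)) ^ (p / 2 - 1)) (‖x‖ ^ 2) := by
      simpa using (Real.hasDerivAt_rpow_const (p := p / 2) (Or.inl htx.ne')).const_add 1
    have h2 := (Real.hasDerivAt_rpow_const (x := 1 + ((‖x‖ ^ 2 : ℝ)) ^ (p / 2))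
        (p := -((N : ℝ) - 1)) (Or.inl hBx'.ne')).comp (‖x‖ ^ 2) h1
    simpa [hφd, Function.comp, mul_assoc, mul_comm, mul_left_comm] using h2.const_mul c
  have hσ : HasFDerivAt (fun y : EuclideanSpace ℝ (Fin N) =>
        c * (1 + ((‖y‖ ^ 2 : ℝ)) ^ (p / 2)) ^ (-((N : ℝ) - 1)))
      (φd • (2 • (innerSL ℝ x))) x := by
    have h7 := hφ.comp_hasFDerivAt x (hasStrictFDerivAt_norm_sq x).hasFDerivAt
    exact h7
  have hFd : HasFDerivAt F
      ((c * (1 + ((‖x‖ ^ 2 : ℝ)) ^ (p / 2)) ^ (-((N : ℝ) - 1))) • ContinuousLinearMap.id ℝ (EuclideanSpace ℝ (Fin N))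
        + (φd • (2 • (innerSL ℝ x))).smulRight x) x := hσ.smul (hasFDerivAt_id x)
  have hEq : (fun y => ‖gradient v y‖ ^ (N - 2) • gradient v y) =ᶠ[nhds x] F :=
    Filter.eventuallyEq_of_mem (IsOpen.mem_nhds isOpen_compl_singleton hx)
      (fun y hy => hfield y hy)
  rw [hEq.fderiv_eq, hFd.fderiv]
  -- compute the divergence sum
  have hterm : ∀ i : Fin N,
      ⟪((c * (1 + ((‖x‖ ^ 2 : ℝ)) ^ (p / 2)) ^ (-((N : ℝ) - 1))) • ContinuousLinearMap.id ℝ (EuclideanSpace ℝ (Fin N))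
        + (φd • (2 • (innerSL ℝ x))).smulRight x) (EuclideanSpace.single i (1 : ℝ)),
        EuclideanSpace.single i (1 : ℝ)⟫
      = c * (1 + ((‖x‖ ^ 2 : ℝ)) ^ (p / 2)) ^ (-((N : ℝ) - 1))
        + 2 * φd * (x i * x i) := by
    intro i
    simp [ContinuousLinearMap.smulRight_apply, inner_add_left, real_inner_smul_left,
      EuclideanSpace.inner_single_left, EuclideanSpace.inner_single_right,
      EuclideanSpace.single_apply, real_inner_comm]
    ring
  simp only [hterm]
  rw [Finset.sum_add_distrib, Finset.sum_const, Finset.card_univ, Fintype.card_fin,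
    ← Finset.mul_sum]
  have hsq : (∑ i : Fin N, x i * x i) = ‖x‖ ^ 2 := by
    rw [EuclideanSpace.norm_eq, Real.sq_sqrt (Finset.sum_nonneg fun i _ => sq_nonneg _)]
    exact Finset.sum_congr rfl fun i _ => by rw [Real.norm_eq_abs, sq_abs, sq]
  rw [hsq, hμ x, hφd, hA x, hA' x, nsmul_eq_mul]
  have hr1 : (1 + ‖x‖ ^ p) ^ (-((N : ℝ) - 1)) = (1 + ‖x‖ ^ p) / (1 + ‖x‖ ^ p) ^ N := by
    rw [show -((N : ℝ) - 1) = 1 + -(N : ℝ) by ring, Real.rpow_add hBx, Real.rpow_one,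
      Real.rpow_neg hBx.le, Real.rpow_natCast]
    ring
  have hr2 : (1 + ‖x‖ ^ p) ^ (-((N : ℝ) - 1) - 1) = 1 / (1 + ‖x‖ ^ p) ^ N := by
    rw [show -((N : ℝ) - 1) - 1 = -(N : ℝ) by ring, Real.rpow_neg hBx.le, Real.rpow_natCast,
      one_div]
  have hr3 : ‖x‖ ^ (p - 2) * ‖x‖ ^ 2 = ‖x‖ ^ p := by
    rw [← Real.rpow_natCast ‖x‖ 2, ← Real.rpow_add hxn]
    norm_num
  have hNpow : ((N : ℝ)) ^ N = (N : ℝ) ^ (N - 1) * (N : ℝ) := by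
    rw [← pow_succ]; congr 1; omega
  have hcN : c * (N : ℝ) = -((N : ℝ) ^ N * p ^ (N - 1)) := by
    rw [hc, mul_pow, hNpow]; ring
  rw [hr1, hr2]
  have hBN : (0 : ℝ) < (1 + ‖x‖ ^ p) ^ N := by positivity
  rw [← hr3]
  field_simp
  linear_combination hcN - c * (‖x‖ ^ (p - 2) * ‖x‖ ^ 2) * hNp
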